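/- Let {A_t : t ∈ ℕ-indexed by the chain p^0 ⊂ p^1 ⊂ … ⊂ p^{N−1} in b^{<ℕ}} be measurable events with μ(A_{p^k}) ≥ ε for all k, where 0 < θ < ε ≤ 1 and N ≥ 1/(ε² − θ²). Then there exist 0 ≤ k₀ < k₁ < N and a strong subtree F of b^{<ℕ} of height 3 with F(0) = p^{k₀} and F(0)⌢_F p = p^{k₁}, such that μ(A_{F(0)} ∩ A_{F(0)⌢_F p}) ≥ θ². -/

import Mathlib

/-- Strict prefix relation on lists: the tree order on `b^{<ℕ}`. -/
def PLt {β : Type*} (s t : List β) : Prop := s <+: t ∧ s ≠ t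

/-- The level of a node `t` in the tree `T ⊆ b^{<ℕ}`: the number of its strict
predecessors (strict prefixes) lying in `T`. -/
noncomputable def lvl {β : Type*} (T : Set (List β)) (t : List β) : ℕ :=
  {s ∈ T | PLt s t}.ncard

/-- `t` is an immediate successor of `s` in the tree `T`. -/
def ImmSuc {β : Type*} (T : Set (List β)) (s t : List β) : Prop :=
  s ∈ T ∧ t ∈ T ∧ PLt s t ∧ ¬∃ u ∈ T, PLt s u ∧ PLt u t

/-- `T` is uniquely rooted: it has a node below all of its nodes. -/
def UniquelyRooted {β : Type*} (T : Set (List β)) : Prop :=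
  ∃ r ∈ T, ∀ t ∈ T, r <+: t

/-- `C` is a maximal chain of the tree `T`. -/
def MaxChainIn {β : Type*} (T C : Set (List β)) : Prop :=
  C ⊆ T ∧ (∀ s ∈ C, ∀ t ∈ C, s <+: t ∨ t <+: s) ∧
    ∀ C', C ⊆ C' → C' ⊆ T → (∀ s ∈ C', ∀ t ∈ C', s <+: t ∨ t <+: s) → C' = C

/-- `T` is balanced with all maximal chains of cardinality `h`
(i.e. balanced and of height `h`). -/
def BalancedOfHeight {β : Type*} (T : Set (List β)) (h : ℕ) : Prop :=
  ∀ C, MaxChainIn T C → C.Finite ∧ C.ncard = h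

/-- Every level of `S` is a subset of some level of `T`. -/
def LevelsAligned {β : Type*} (T S : Set (List β)) : Prop :=
  ∀ s ∈ S, ∀ s' ∈ S, lvl S s = lvl S s' → lvl T s = lvl T s'

/-- For every non-maximal node `s` of `S` and every immediate successor `t` of `s`
in `T` there is a unique immediate successor `s'` of `s` in `S` with `t ≤ s'`. -/
def SuccCond {β : Type*} (T S : Set (List β)) : Prop :=
  ∀ s ∈ S, (∃ x ∈ S, PLt s x) → ∀ t, ImmSuc T s t → ∃! s', ImmSuc S s s' ∧ t <+: s'

/-- `S` is a strong subtree of `T` of (finite) height `h`. -/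
def IsStrongSubtreeFin {β : Type*} (T S : Set (List β)) (h : ℕ) : Prop :=
  S ⊆ T ∧ S.Nonempty ∧ UniquelyRooted S ∧ BalancedOfHeight S h ∧
    LevelsAligned T S ∧ SuccCond T S

/-- `S` is a strong subtree of `T` of infinite height (uniquely rooted, balanced with
all maximal chains infinite, levels of `S` inside levels of `T`, successor condition). -/
def IsStrongSubtreeInf {β : Type*} (T S : Set (List β)) : Prop :=
  S ⊆ T ∧ S.Nonempty ∧ UniquelyRooted S ∧ (∀ s ∈ S, ∃ x ∈ S, PLt s x) ∧
    LevelsAligned T S ∧ SuccCond T S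

/-- `r` is the root of `S`. -/
def IsRoot {β : Type*} (S : Set (List β)) (r : List β) : Prop :=
  r ∈ S ∧ ∀ x ∈ S, r <+: x

/-- `v` is the immediate successor of `u` in `S` in direction `p`, i.e. the unique
immediate successor of `u` in `S` extending `u⌢p`. -/
def DirSucc {β : Type*} (S : Set (List β)) (u : List β) (p : β) (v : List β) : Prop :=
  ImmSuc S u v ∧ (u ++ [p]) <+: v

open MeasureTheory

section Aux

section Tree
variable {β : Type*}

lemma plt_len {s t : List β} (h : PLt s t) : s.length < t.length :=
  lt_of_le_of_ne h.1.length_le (fun he => h.2 (h.1.eq_of_length he))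

lemma plt_of_len {s t : List β} (h : s <+: t) (hl : s.length < t.length) : PLt s t :=
  ⟨h, fun he => by subst he; exact lt_irrefl _ hl⟩

lemma lvl_univ (t : List β) : lvl (Set.univ) t = t.length := by
  have h1 : {s ∈ (Set.univ : Set (List β)) | PLt s t}
      = (fun i => t.take i) '' (Set.Iio t.length) := by
    ext s
    simp only [Set.mem_setOf_eq, Set.mem_univ, true_and, Set.mem_image, Set.mem_Iio]
    constructor
    · rintro ⟨hp, hne⟩
      exact ⟨s.length, lt_of_le_of_ne hp.length_le (fun he => hne (hp.eq_of_length he)),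
        (List.prefix_iff_eq_take.1 hp).symm⟩
    · rintro ⟨i, hi, rfl⟩
      refine ⟨List.take_prefix _ _, fun he => ?_⟩
      have := congrArg List.length he
      simp only [List.length_take] at this
      omega
  have hinj : Set.InjOn (fun i => t.take i) (Set.Iio t.length) := by
    intro i hi j hj he
    have := congrArg List.length he
    simp only [List.length_take, Set.mem_Iio] at this hi hj
    omega
  rw [lvl, h1, Set.ncard_image_of_injOn hinj, ← Finset.coe_Iio, Set.ncard_coe_finset,
    Nat.card_Iio]

end Tree

section Construction

variable {b : ℕ}

/-- The strong subtree of height 3. -/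
def Str (p : Fin b) (k₀ d : ℕ) : Set (List (Fin b)) :=
  {x | x = List.replicate k₀ p ∨
    (∃ j, x = List.replicate k₀ p ++ j :: List.replicate d p) ∨
    (∃ j j', x = List.replicate k₀ p ++ j :: List.replicate d p ++ [j'])}

variable (p : Fin b) (k₀ d : ℕ)

local notation "r" => List.replicate k₀ p
local notation "L1" => fun (j : Fin b) => List.replicate k₀ p ++ j :: List.replicate d p
local notation "L2" => fun (j j' : Fin b) => List.replicate k₀ p ++ j :: List.replicate d p ++ [j']

lemma len_r : (r).length = k₀ := List.length_replicate
lemma len_L1 (j : Fin b) : (L1 j).length = k₀ + d + 1 := by simp; ring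
lemma len_L2 (j j' : Fin b) : (L2 j j').length = k₀ + d + 2 := by simp; ring

lemma r_mem : (r) ∈ Str p k₀ d := Or.inl rfl
lemma L1_mem (j : Fin b) : L1 j ∈ Str p k₀ d := Or.inr (Or.inl ⟨j, rfl⟩)
lemma L2_mem (j j' : Fin b) : L2 j j' ∈ Str p k₀ d := Or.inr (Or.inr ⟨j, j', rfl⟩)

lemma r_pre_L1 (j : Fin b) : (r) <+: L1 j := ⟨j :: List.replicate d p, rfl⟩
lemma L1_pre_L2 (j j' : Fin b) : L1 j <+: L2 j j' := ⟨[j'], rfl⟩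
lemma r_pre_L2 (j j' : Fin b) : (r) <+: L2 j j' :=
  (r_pre_L1 p k₀ d j).trans (L1_pre_L2 p k₀ d j j')

lemma root_pre : ∀ x ∈ Str p k₀ d, (r) <+: x := by
  rintro x (rfl | ⟨j, rfl⟩ | ⟨j, j', rfl⟩)
  · exact List.prefix_refl _
  · exact r_pre_L1 p k₀ d j
  · exact r_pre_L2 p k₀ d j j'

lemma plt_r_L1 (j : Fin b) : PLt (r) (L1 j) :=
  plt_of_len (r_pre_L1 p k₀ d j) (by rw [len_r, len_L1]; omega)

lemma plt_L1_L2 (j j' : Fin b) : PLt (L1 j) (L2 j j') :=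
  plt_of_len (L1_pre_L2 p k₀ d j j') (by rw [len_L1, len_L2]; omega)

lemma plt_r_L2 (j j' : Fin b) : PLt (r) (L2 j j') :=
  plt_of_len (r_pre_L2 p k₀ d j j') (by rw [len_r, len_L2]; omega)

/-- lengths of elements of `Str`. -/
lemma mem_len {x : List (Fin b)} (hx : x ∈ Str p k₀ d) :
    x.length = k₀ ∨ x.length = k₀ + d + 1 ∨ x.length = k₀ + d + 2 := by
  rcases hx with rfl | ⟨j, rfl⟩ | ⟨j, j', rfl⟩
  · exact Or.inl (len_r p k₀)
  · exact Or.inr (Or.inl (len_L1 p k₀ d j))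
  · exact Or.inr (Or.inr (len_L2 p k₀ d j j'))

/-- two comparable elements of equal length are equal -/
lemma eq_of_len_pre {x y : List (Fin b)} (h : x <+: y) (hl : x.length = y.length) : x = y :=
  h.eq_of_length hl

/-- a prefix of `L1 j` of length `k₀+d+1` equals `L1 j`, etc. -/
lemma L1_inj {j j' : Fin b} (h : L1 j = L1 j') : j = j' := by
  have := List.append_cancel_left h
  exact (List.cons.injEq _ _ _ _).mp this |>.1

lemma L2_inj {j₁ j₂ j₁' j₂' : Fin b} (h : L2 j₁ j₂ = L2 j₁' j₂') : j₁ = j₁' ∧ j₂ = j₂' := by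
  have h2 := List.append_cancel_left (as := List.replicate k₀ p)
    (bs := j₁ :: List.replicate d p ++ [j₂]) (cs := j₁' :: List.replicate d p ++ [j₂'])
    (by simpa [List.append_assoc] using h)
  have h3 := (List.cons.injEq _ _ _ _).mp h2
  refine ⟨h3.1, ?_⟩
  have h4 := List.append_cancel_left h3.2
  exact (List.cons.injEq _ _ _ _).mp h4 |>.1

/-- below `L1 j` inside `Str` there is only the root -/
lemma below_L1 {x : List (Fin b)} (hx : x ∈ Str p k₀ d) {j : Fin b}
    (h : PLt x (L1 j)) : x = r := by
  have hl := plt_len h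
  rw [len_L1] at hl
  rcases hx with rfl | ⟨j₂, rfl⟩ | ⟨j₂, j₂', rfl⟩
  · rfl
  · rw [len_L1] at hl; omega
  · rw [len_L2] at hl; omega

lemma below_L2 {x : List (Fin b)} (hx : x ∈ Str p k₀ d) {j j' : Fin b}
    (h : PLt x (L2 j j')) : x = r ∨ x = L1 j := by
  have hl := plt_len h
  rw [len_L2] at hl
  rcases hx with rfl | ⟨j₂, rfl⟩ | ⟨j₂, j₂', rfl⟩
  · exact Or.inl rfl
  · right
    have : L1 j₂ <+: L1 j := by
      refine List.prefix_of_prefix_length_le h.1 (L1_pre_L2 p k₀ d j j') ?_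
      rw [len_L1, len_L1]
    exact this.eq_of_length (by rw [len_L1, len_L1])
  · rw [len_L2] at hl; omega

/-- nothing in `Str` strictly above the root and strictly below `L1 j` -/
lemma imm_r_L1 (j : Fin b) : ImmSuc (Str p k₀ d) (r) (L1 j) := by
  refine ⟨r_mem p k₀ d, L1_mem p k₀ d j, plt_r_L1 p k₀ d j, ?_⟩
  rintro ⟨u, hu, h1, h2⟩
  have := below_L1 p k₀ d hu h2
  subst this
  exact h1.2 rfl

lemma imm_L1_L2 (j j' : Fin b) : ImmSuc (Str p k₀ d) (L1 j) (L2 j j') := by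
  refine ⟨L1_mem p k₀ d j, L2_mem p k₀ d j j', plt_L1_L2 p k₀ d j j', ?_⟩
  rintro ⟨u, hu, h1, h2⟩
  have hu1 := plt_len h1
  have hu2 := plt_len h2
  rw [len_L1] at hu1
  rw [len_L2] at hu2
  rcases mem_len p k₀ d hu with h | h | h <;> omega

lemma lvl_S_r : lvl (Str p k₀ d) (r) = 0 := by
  rw [lvl]
  have he : {s ∈ Str p k₀ d | PLt s (r)} = ∅ := by
    ext x
    simp only [Set.mem_setOf_eq, Set.mem_empty_iff_false, iff_false, not_and]
    intro hx h
    have := plt_len h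
    rw [len_r] at this
    rcases mem_len p k₀ d hx with hh | hh | hh <;> omega
  rw [he, Set.ncard_empty]

lemma lvl_S_L1 (j : Fin b) : lvl (Str p k₀ d) (L1 j) = 1 := by
  rw [lvl]
  have : {s ∈ Str p k₀ d | PLt s (L1 j)} = {r} := by
    ext x
    simp only [Set.mem_setOf_eq, Set.mem_singleton_iff]
    constructor
    · rintro ⟨hx, h⟩; exact below_L1 p k₀ d hx h
    · rintro rfl; exact ⟨r_mem p k₀ d, plt_r_L1 p k₀ d j⟩
  rw [this, Set.ncard_singleton]

lemma r_ne_L1 (j : Fin b) : (r) ≠ L1 j := by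
  intro h
  have := congrArg List.length h
  rw [len_r, len_L1] at this; omega

lemma lvl_S_L2 (j j' : Fin b) : lvl (Str p k₀ d) (L2 j j') = 2 := by
  rw [lvl]
  have : {s ∈ Str p k₀ d | PLt s (L2 j j')} = {r, L1 j} := by
    ext x
    simp only [Set.mem_setOf_eq, Set.mem_insert_iff, Set.mem_singleton_iff]
    constructor
    · rintro ⟨hx, h⟩; exact below_L2 p k₀ d hx h
    · rintro (rfl | rfl)
      · exact ⟨r_mem p k₀ d, plt_r_L2 p k₀ d j j'⟩
      · exact ⟨L1_mem p k₀ d j, plt_L1_L2 p k₀ d j j'⟩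
  rw [this, Set.ncard_pair (r_ne_L1 p k₀ d j)]

lemma r_ne_L2 (j j' : Fin b) : (r) ≠ L2 j j' := by
  intro h
  have := congrArg List.length h
  rw [len_r, len_L2] at this; omega

lemma L1_ne_L2 (j₁ j j' : Fin b) : L1 j₁ ≠ L2 j j' := by
  intro h
  have := congrArg List.length h
  rw [len_L1, len_L2] at this; omega

lemma levels_aligned : LevelsAligned Set.univ (Str p k₀ d) := by
  intro s hs s' hs' h
  rw [lvl_univ, lvl_univ]
  rcases hs with rfl | ⟨j, rfl⟩ | ⟨j, j', rfl⟩ <;>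
    rcases hs' with rfl | ⟨j₂, rfl⟩ | ⟨j₂, j₂', rfl⟩ <;>
    simp only [lvl_S_r, lvl_S_L1, lvl_S_L2] at h <;>
    simp only [len_r, len_L1, len_L2] <;>
    omega

lemma chains3 : BalancedOfHeight (Str p k₀ d) 3 := by
  rintro C ⟨hsub, hchain, hmax⟩
  have hrC : (r) ∈ C := by
    have h2 : C ∪ {r} ⊆ Str p k₀ d :=
      Set.union_subset hsub (by simpa using r_mem p k₀ d)
    have h3 : ∀ x ∈ C ∪ {r}, ∀ y ∈ C ∪ {r}, x <+: y ∨ y <+: x := by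
      rintro x (hx | rfl) y (hy | rfl)
      · exact hchain x hx y hy
      · exact Or.inr (root_pre p k₀ d x (hsub hx))
      · exact Or.inl (root_pre p k₀ d y (hsub hy))
      · exact Or.inl (List.prefix_refl _)
    have := hmax _ Set.subset_union_left h2 h3
    rw [← this]; exact Or.inr rfl
  have hL2 : ∃ j j', L2 j j' ∈ C := by
    by_contra hno
    push_neg at hno
    by_cases hL1 : ∃ j, L1 j ∈ C
    · obtain ⟨j, hj⟩ := hL1
      have h2 : C ∪ {L2 j p} ⊆ Str p k₀ d :=
        Set.union_subset hsub (by simpa using L2_mem p k₀ d j p)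
      have key : ∀ y ∈ C, y <+: L2 j p := by
        intro y hy
        rcases hsub hy with rfl | ⟨j₂, rfl⟩ | ⟨j₂, j₂', rfl⟩
        · exact r_pre_L2 p k₀ d j p
        · have hcmp := hchain _ hy _ hj
          have heq : List.replicate k₀ p ++ j₂ :: List.replicate d p
              = List.replicate k₀ p ++ j :: List.replicate d p := by
            rcases hcmp with h | h
            · exact h.eq_of_length (by rw [len_L1, len_L1])
            · exact (h.eq_of_length (by rw [len_L1, len_L1])).symm
          rw [heq]; exact L1_pre_L2 p k₀ d j p
        · exact absurd hy (hno j₂ j₂')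
      have h3 : ∀ x ∈ C ∪ {L2 j p}, ∀ y ∈ C ∪ {L2 j p}, x <+: y ∨ y <+: x := by
        rintro x (hx | rfl) y (hy | rfl)
        · exact hchain x hx y hy
        · exact Or.inl (key x hx)
        · exact Or.inr (key y hy)
        · exact Or.inl (List.prefix_refl _)
      have := hmax _ Set.subset_union_left h2 h3
      refine hno j p ?_
      rw [← this]; exact Or.inr rfl
    · push_neg at hL1
      have key : ∀ y ∈ C, y = r := by
        intro y hy
        rcases hsub hy with rfl | ⟨j₂, rfl⟩ | ⟨j₂, j₂', rfl⟩
        · rfl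
        · exact absurd hy (hL1 j₂)
        · exact absurd hy (hno j₂ j₂')
      have h2 : C ∪ {L1 p} ⊆ Str p k₀ d :=
        Set.union_subset hsub (by simpa using L1_mem p k₀ d p)
      have h3 : ∀ x ∈ C ∪ {L1 p}, ∀ y ∈ C ∪ {L1 p}, x <+: y ∨ y <+: x := by
        rintro x (hx | rfl) y (hy | rfl)
        · exact hchain x hx y hy
        · rw [key x hx]; exact Or.inl (r_pre_L1 p k₀ d p)
        · rw [key y hy]; exact Or.inr (r_pre_L1 p k₀ d p)
        · exact Or.inl (List.prefix_refl _)
      have := hmax _ Set.subset_union_left h2 h3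
      refine hL1 p ?_
      rw [← this]; exact Or.inr rfl
  obtain ⟨j, j', hv⟩ := hL2
  have hmid : ∀ y ∈ C, y = r ∨ y = L1 j ∨ y = L2 j j' := by
    intro y hy
    rcases hsub hy with rfl | ⟨j₂, rfl⟩ | ⟨j₂, j₂', rfl⟩
    · exact Or.inl rfl
    · right; left
      have hcmp := hchain _ hy _ hv
      have hpre : L1 j₂ <+: L2 j j' := by
        rcases hcmp with h | h
        · exact h
        · exact absurd (h.length_le) (by rw [len_L1, len_L2]; omega)
      have : L1 j₂ <+: L1 j :=
        List.prefix_of_prefix_length_le hpre (L1_pre_L2 p k₀ d j j') (by rw [len_L1, len_L1])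
      exact this.eq_of_length (by rw [len_L1, len_L1])
    · right; right
      have hcmp := hchain _ hy _ hv
      rcases hcmp with h | h
      · exact h.eq_of_length (by rw [len_L2, len_L2])
      · exact (h.eq_of_length (by rw [len_L2, len_L2])).symm
  have hu : L1 j ∈ C := by
    have h2 : C ∪ {L1 j} ⊆ Str p k₀ d :=
      Set.union_subset hsub (by simpa using L1_mem p k₀ d j)
    have key : ∀ y ∈ C, y <+: L1 j ∨ L1 j <+: y := by
      intro y hy
      rcases hmid y hy with rfl | rfl | rfl
      · exact Or.inl (r_pre_L1 p k₀ d j)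
      · exact Or.inl (List.prefix_refl _)
      · exact Or.inr (L1_pre_L2 p k₀ d j j')
    have h3 : ∀ x ∈ C ∪ {L1 j}, ∀ y ∈ C ∪ {L1 j}, x <+: y ∨ y <+: x := by
      rintro x (hx | rfl) y (hy | rfl)
      · exact hchain x hx y hy
      · exact key x hx
      · exact (key y hy).symm
      · exact Or.inl (List.prefix_refl _)
    have := hmax _ Set.subset_union_left h2 h3
    rw [← this]; exact Or.inr rfl
  have hCeq : C = {r, L1 j, L2 j j'} := by
    apply Set.Subset.antisymm
    · intro y hy
      rcases hmid y hy with rfl | rfl | rfl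
      · exact Or.inl rfl
      · exact Or.inr (Or.inl rfl)
      · exact Or.inr (Or.inr rfl)
    · rintro y (rfl | rfl | rfl)
      · exact hrC
      · exact hu
      · exact hv
  constructor
  · rw [hCeq]; exact (Set.finite_singleton _).insert _ |>.insert _
  · rw [hCeq, Set.ncard_insert_of_notMem, Set.ncard_insert_of_notMem, Set.ncard_singleton]
    · simpa using L1_ne_L2 p k₀ d j j j'
    · simp only [Set.mem_insert_iff, Set.mem_singleton_iff]
      push_neg
      exact ⟨r_ne_L1 p k₀ d j, r_ne_L2 p k₀ d j j'⟩

lemma succ_cond : SuccCond Set.univ (Str p k₀ d) := by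
  intro s hs hx t ht
  obtain ⟨-, -, hst, hmin⟩ := ht
  have hlen : t.length = s.length + 1 := by
    by_contra hne
    have h1 := plt_len hst
    have h2 : s.length + 1 < t.length := by omega
    apply hmin
    refine ⟨t.take (s.length+1), Set.mem_univ _, ?_, ?_⟩
    · refine plt_of_len ?_ (by simp only [List.length_take]; omega)
      exact List.prefix_of_prefix_length_le hst.1 (List.take_prefix _ _)
        (by simp only [List.length_take]; omega)
    · exact plt_of_len (List.take_prefix _ _) (by simp only [List.length_take]; omega)
  obtain ⟨w, rfl⟩ := hst.1
  have hw : w.length = 1 := by rw [List.length_append] at hlen; omega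
  obtain ⟨a, rfl⟩ := List.length_eq_one_iff.1 hw
  rcases hs with rfl | ⟨j, rfl⟩ | ⟨j, j', rfl⟩
  · refine ⟨L1 a, ⟨imm_r_L1 p k₀ d a, ⟨List.replicate d p, by simp⟩⟩, ?_⟩
    rintro y ⟨⟨-, hyS, hply, hnb⟩, hpre⟩
    rcases hyS with rfl | ⟨j₂, rfl⟩ | ⟨j₂, j₂', rfl⟩
    · exact absurd rfl hply.2
    · have h5 := (List.prefix_append_right_inj (r)).1 hpre
      obtain ⟨ha, -⟩ := List.cons_prefix_cons.1 h5
      rw [← ha]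
    · exact absurd ⟨L1 j₂, L1_mem p k₀ d j₂, plt_r_L1 p k₀ d j₂,
        plt_L1_L2 p k₀ d j₂ j₂'⟩ hnb
  · refine ⟨L2 j a, ⟨imm_L1_L2 p k₀ d j a, List.prefix_refl _⟩, ?_⟩
    rintro y ⟨⟨-, hyS, hply, hnb⟩, hpre⟩
    have := plt_len hply
    rw [len_L1] at this
    rcases hyS with rfl | ⟨j₂, rfl⟩ | ⟨j₂, j₂', rfl⟩
    · rw [len_r] at this; omega
    · rw [len_L1] at this; omega
    · exact (hpre.eq_of_length (by simp only [len_L2, List.length_append,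
        List.length_cons, List.length_replicate, List.length_nil])).symm
  · exfalso
    obtain ⟨x, hxS, hplt⟩ := hx
    have := plt_len hplt
    rw [len_L2] at this
    rcases mem_len p k₀ d hxS with h|h|h <;> omega

lemma strong_tree (k₁ : ℕ) (h : k₀ < k₁) :
    ∃ S : Set (List (Fin b)), IsStrongSubtreeFin Set.univ S 3 ∧
      IsRoot S (List.replicate k₀ p) ∧
      DirSucc S (List.replicate k₀ p) p (List.replicate k₁ p) := by
  obtain ⟨d, rfl⟩ : ∃ d, k₁ = k₀ + d + 1 := ⟨k₁ - k₀ - 1, by omega⟩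
  have hrep : List.replicate (k₀+d+1) p
      = List.replicate k₀ p ++ p :: List.replicate d p := by
    rw [show k₀+d+1 = k₀+(d+1) by ring, List.replicate_add, List.replicate_succ]
  refine ⟨Str p k₀ d,
    ⟨Set.subset_univ _, ⟨r, r_mem p k₀ d⟩, ⟨r, r_mem p k₀ d, root_pre p k₀ d⟩,
      chains3 p k₀ d, levels_aligned p k₀ d, succ_cond p k₀ d⟩,
    ⟨r_mem p k₀ d, root_pre p k₀ d⟩, ?_⟩
  rw [hrep]
  exact ⟨imm_r_L1 p k₀ d p, ⟨List.replicate d p, by simp⟩⟩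

end Construction

open Finset
open scoped ENNReal
open MeasureTheory Finset
open scoped ENNReal

lemma pigeon {Ω : Type*} [MeasurableSpace Ω] (μ : Measure Ω) [IsProbabilityMeasure μ]
    (θ ε : ℝ) (hθ : 0 < θ) (hθε : θ < ε) (hε : ε ≤ 1)
    (N : ℕ) (hN : 1 / (ε ^ 2 - θ ^ 2) ≤ (N : ℝ))
    (A : ℕ → Set Ω) (hmeas : ∀ k < N, MeasurableSet (A k))
    (hA : ∀ k < N, ε ≤ (μ (A k)).toReal) :
    ∃ k₀ k₁, k₀ < k₁ ∧ k₁ < N ∧ θ ^ 2 ≤ (μ (A k₀ ∩ A k₁)).toReal := by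
  have hd : 0 < ε ^ 2 - θ ^ 2 := by nlinarith
  have hN1 : 1 ≤ (N : ℝ) * (ε ^ 2 - θ ^ 2) := by
    rw [div_le_iff₀ hd] at hN; linarith
  have hNpos : 0 < N := by
    by_contra h
    push_neg at h
    interval_cases N
    simp at hN1; nlinarith
  by_contra hcon
  push_neg at hcon
  have hsmall : ∀ k l, k < N → l < N → k ≠ l → (μ (A k ∩ A l)).toReal ≤ θ ^ 2 := by
    intro k l hk hl hkl
    rcases hkl.lt_or_gt with h | h
    · exact le_of_lt (hcon k l h hl)
    · rw [Set.inter_comm]; exact le_of_lt (hcon l k h hk)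
  set f : Ω → ℝ := ∑ k ∈ range N, Set.indicator (A k) 1 with hf
  have hmem : MemLp f 2 μ :=
    memLp_finset_sum' _ fun k hk => (memLp_const (1:ℝ)).indicator (hmeas k (mem_range.1 hk))
  have hvar := ProbabilityTheory.variance_nonneg f μ
  rw [ProbabilityTheory.variance_eq_sub hmem, sub_nonneg] at hvar
  simp only [Pi.pow_apply] at hvar
  have hIf : ∫ ω, f ω ∂μ = ∑ k ∈ range N, (μ (A k)).toReal := by
    rw [hf]
    simp only [Finset.sum_apply]
    rw [integral_finset_sum]
    · exact Finset.sum_congr rfl fun k hk => integral_indicator_one (hmeas k (mem_range.1 hk))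
    · intro k hk
      exact (integrable_const (1:ℝ)).indicator (hmeas k (mem_range.1 hk))
  have hIf2 : ∫ ω, (f ω)^2 ∂μ = ∑ k ∈ range N, ∑ l ∈ range N, (μ (A k ∩ A l)).toReal := by
    have heq : ∀ ω, (f ω)^2 = ∑ k ∈ range N, ∑ l ∈ range N, Set.indicator (A k ∩ A l) 1 ω := by
      intro ω
      rw [sq, hf]
      simp only [Finset.sum_apply]
      rw [Finset.sum_mul_sum]
      refine Finset.sum_congr rfl fun k _ => Finset.sum_congr rfl fun l _ => ?_
      rw [Set.inter_indicator_one]; rfl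
    simp_rw [heq]
    rw [integral_finset_sum]
    · refine Finset.sum_congr rfl fun k hk => ?_
      rw [integral_finset_sum]
      · exact Finset.sum_congr rfl fun l hl =>
          integral_indicator_one ((hmeas k (mem_range.1 hk)).inter (hmeas l (mem_range.1 hl)))
      · intro l hl
        exact (integrable_const (1:ℝ)).indicator ((hmeas k (mem_range.1 hk)).inter (hmeas l (mem_range.1 hl)))
    · intro k hk
      apply integrable_finset_sum
      intro l hl
      exact (integrable_const (1:ℝ)).indicator ((hmeas k (mem_range.1 hk)).inter (hmeas l (mem_range.1 hl)))
  have hmean : (N : ℝ) * ε ≤ ∫ ω, f ω ∂μ := by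
    rw [hIf]
    calc (N:ℝ) * ε = ∑ _k ∈ range N, ε := by rw [Finset.sum_const, card_range, nsmul_eq_mul]
    _ ≤ _ := Finset.sum_le_sum fun k hk => hA k (mem_range.1 hk)
  have h2 : ∫ ω, (f ω)^2 ∂μ ≤ (N:ℝ) + (N:ℝ) * ((N:ℝ) - 1) * θ^2 := by
    rw [hIf2]
    have key : ∀ k ∈ range N, ∑ l ∈ range N, (μ (A k ∩ A l)).toReal ≤ 1 + ((N:ℝ) - 1) * θ^2 := by
      intro k hk
      have hk' := mem_range.1 hk
      calc ∑ l ∈ range N, (μ (A k ∩ A l)).toReal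
          ≤ ∑ l ∈ range N, (if l = k then 1 else θ^2) := by
            refine Finset.sum_le_sum fun l hl => ?_
            by_cases h : l = k
            · rw [if_pos h]
              have h1 : μ (A k ∩ A l) ≤ 1 := le_trans (measure_mono Set.inter_subset_left) prob_le_one
              calc (μ (A k ∩ A l)).toReal ≤ (1 : ℝ≥0∞).toReal :=
                    ENNReal.toReal_mono ENNReal.one_ne_top h1
                _ = 1 := ENNReal.toReal_one
            · rw [if_neg h]
              exact hsmall k l hk' (mem_range.1 hl) (fun hh => h hh.symm)
        _ = (if k = k then (1:ℝ) else θ^2)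
              + ∑ l ∈ (range N).erase k, (if l = k then (1:ℝ) else θ^2) :=
            (Finset.add_sum_erase _ _ hk).symm
        _ = 1 + ((N:ℝ) - 1) * θ^2 := by
            rw [if_pos rfl,
              Finset.sum_congr rfl (fun l hl => if_neg (Finset.ne_of_mem_erase hl)),
              Finset.sum_const, Finset.card_erase_of_mem hk, card_range, nsmul_eq_mul,
              Nat.cast_sub hNpos]
            push_cast; ring
    calc ∑ k ∈ range N, ∑ l ∈ range N, (μ (A k ∩ A l)).toReal
        ≤ ∑ _k ∈ range N, (1 + ((N:ℝ) - 1) * θ^2) := Finset.sum_le_sum key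
      _ = (N:ℝ) * (1 + ((N:ℝ)-1) * θ^2) := by rw [Finset.sum_const, card_range, nsmul_eq_mul]
      _ = (N:ℝ) + (N:ℝ) * ((N:ℝ)-1) * θ^2 := by ring
  have hNr : (1:ℝ) ≤ (N:ℝ) := by exact_mod_cast hNpos
  have hfmean : 0 ≤ ∫ ω, f ω ∂μ := le_trans (mul_nonneg (Nat.cast_nonneg N) (le_of_lt (hθ.trans hθε))) hmean
  have hm2 : ((N:ℝ) * ε)^2 ≤ (∫ ω, f ω ∂μ)^2 := by
    apply pow_le_pow_left₀ (mul_nonneg (Nat.cast_nonneg N) (le_of_lt (hθ.trans hθε))) hmean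
  have hcontr : ((N:ℝ) * ε)^2 ≤ (N:ℝ) + (N:ℝ) * ((N:ℝ) - 1) * θ^2 :=
    le_trans hm2 (le_trans hvar h2)
  nlinarith [mul_le_mul_of_nonneg_left hN1 (le_trans zero_le_one hNr), hθ, hNr]

end Aux

theorem stmt18 {Ω : Type*} [MeasurableSpace Ω] (μ : Measure Ω)
    [IsProbabilityMeasure μ]
    (b : ℕ) (hb : 2 ≤ b) (p : Fin b)
    (θ ε : ℝ) (hθ : 0 < θ) (hθε : θ < ε) (hε : ε ≤ 1)
    (N : ℕ) (hN : 1 / (ε ^ 2 - θ ^ 2) ≤ (N : ℝ))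
    (A : List (Fin b) → Set Ω)
    (hmeas : ∀ k < N, MeasurableSet (A (List.replicate k p)))
    (hA : ∀ k < N, ε ≤ (μ (A (List.replicate k p))).toReal) :
    ∃ k₀ k₁, k₀ < k₁ ∧ k₁ < N ∧
      ∃ S : Set (List (Fin b)), IsStrongSubtreeFin Set.univ S 3 ∧
        IsRoot S (List.replicate k₀ p) ∧
        DirSucc S (List.replicate k₀ p) p (List.replicate k₁ p) ∧
        θ ^ 2 ≤ (μ (A (List.replicate k₀ p) ∩ A (List.replicate k₁ p))).toReal := by
  obtain ⟨k₀, k₁, hk01, hk1N, hθ2⟩ :=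
    pigeon μ θ ε hθ hθε hε N hN (fun k => A (List.replicate k p)) hmeas hA
  obtain ⟨S, hS1, hS2, hS3⟩ := strong_tree p k₀ k₁ hk01
  exact ⟨k₀, k₁, hk01, hk1N, S, hS1, hS2, hS3, hθ2⟩
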